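/- Strict monotonicity of the deviation from the Gaussian quantile map: Let c ∈ ℝ with c ≠ 0, let Φ denote the cumulative distribution function of the standard normal distribution N(0,1), and let h : ℝ → ℝ be a function satisfying Φ(h(t)) = (1/2) Φ(t − c) + (1/2) Φ(t + c) for all t ∈ ℝ. Then the function F(t) := t − h(t) is strictly increasing on ℝ. -/

import Mathlib

open MeasureTheory

/-- The standard normal cumulative distribution function
`Φ(t) = ∫_{−∞}^t (1/√(2π)) e^{−u²/2} du`. -/
noncomputable def stdNormalCDF (t : ℝ) : ℝ :=
  ∫ u in Set.Iic t, Real.exp (-u ^ 2 / 2) / Real.sqrt (2 * Real.pi)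

namespace StdNormalAux

noncomputable def φ (u : ℝ) : ℝ := Real.exp (-u ^ 2 / 2) / Real.sqrt (2 * Real.pi)

lemma φ_pos (u : ℝ) : 0 < φ u := by
  have h1 : 0 < Real.sqrt (2 * Real.pi) :=
    Real.sqrt_pos.2 (by positivity)
  exact div_pos (Real.exp_pos _) h1

lemma φ_cont : Continuous φ := by
  unfold φ
  fun_prop

lemma φ_integrable : Integrable φ := by
  have : Integrable (fun u : ℝ => Real.exp (-(1/2 : ℝ) * u ^ 2)) :=
    integrable_exp_neg_mul_sq (by norm_num)
  have h := this.div_const (Real.sqrt (2 * Real.pi))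
  refine h.congr (Filter.Eventually.of_forall fun u => ?_)
  unfold φ
  ring_nf

lemma cdf_sub (a b : ℝ) :
    stdNormalCDF b - stdNormalCDF a = ∫ r in a..b, φ r := by
  exact intervalIntegral.integral_Iic_sub_Iic φ_integrable.integrableOn φ_integrable.integrableOn

lemma cdf_strictMono : StrictMono stdNormalCDF := by
  intro a b hab
  have h : 0 < ∫ r in a..b, φ r :=
    intervalIntegral.intervalIntegral_pos_of_pos
      (φ_cont.intervalIntegrable a b) (fun x => φ_pos x) hab
  have := cdf_sub a b
  linarith

lemma φ_shift (r s : ℝ) : φ (r + s) = φ r * Real.exp (-s * r - s ^ 2 / 2) := by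
  unfold φ
  rw [div_mul_eq_mul_div, ← Real.exp_add]
  ring_nf

end StdNormalAux

open StdNormalAux

/-- Strict monotonicity of the deviation from the Gaussian quantile map: if `c ≠ 0` and
`h : ℝ → ℝ` satisfies `Φ(h(t)) = (1/2)Φ(t−c) + (1/2)Φ(t+c)` for all `t`, then
`F(t) = t − h(t)` is strictly increasing. -/
theorem deviation_from_gaussian_quantile_strictMono
    (c : ℝ) (hc : c ≠ 0) (h : ℝ → ℝ)
    (hh : ∀ t, stdNormalCDF (h t)
      = (1 / 2) * stdNormalCDF (t - c) + (1 / 2) * stdNormalCDF (t + c)) :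
    StrictMono (fun t => t - h t) := by
  intro t₁ t₂ hlt
  simp only
  set s := t₂ - t₁ with hs
  have hs0 : 0 < s := by simp [hs]; linarith
  set a := t₁ - |c| with ha
  set b := t₁ + |c| with hb
  have hab : a < b := by
    have : 0 < |c| := abs_pos.2 hc
    simp [ha, hb]; linarith
  -- the identity in terms of a, b
  have key : ∀ t : ℝ, (1 / 2) * stdNormalCDF (t - c) + (1 / 2) * stdNormalCDF (t + c)
      = (1 / 2) * stdNormalCDF (t - |c|) + (1 / 2) * stdNormalCDF (t + |c|) := by
    intro t
    rcases abs_choice c with hca | hca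
    · rw [hca]
    · rw [hca]; ring_nf
  set x := h t₁ with hx
  have hΦx : stdNormalCDF x = (1/2) * stdNormalCDF a + (1/2) * stdNormalCDF b := by
    rw [hx, hh t₁, key t₁]
  have hΦab : stdNormalCDF a < stdNormalCDF b := cdf_strictMono hab
  have hax : a < x := by
    have : stdNormalCDF a < stdNormalCDF x := by rw [hΦx]; linarith
    exact cdf_strictMono.lt_iff_lt.mp this
  have hxb : x < b := by
    have : stdNormalCDF x < stdNormalCDF b := by rw [hΦx]; linarith
    exact cdf_strictMono.lt_iff_lt.mp this
  -- integrals
  set K := Real.exp (-s * x - s ^ 2 / 2) with hK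
  set M := ∫ r in a..x, φ r with hM
  have hM2 : (∫ r in x..b, φ r) = M := by
    have h1 := cdf_sub a x
    have h2 := cdf_sub x b
    rw [hM]
    linarith
  have contshift : Continuous (fun r : ℝ => φ (r + s)) := φ_cont.comp (by continuity)
  -- I1 > K * M
  have hI1 : K * M < ∫ r in a..x, φ (r + s) := by
    have hpos : 0 < ∫ r in a..x, (φ (r + s) - K * φ r) := by
      apply intervalIntegral.intervalIntegral_pos_of_pos_on
      · exact (contshift.sub (continuous_const.mul φ_cont)).intervalIntegrable a x
      · intro r hr
        rw [φ_shift]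
        have : K < Real.exp (-s * r - s ^ 2 / 2) := by
          apply Real.exp_lt_exp.2
          have := hr.2
          nlinarith [hr.2, hs0]
        nlinarith [φ_pos r]
      · exact hax
    have heq : (∫ r in a..x, (φ (r + s) - K * φ r))
        = (∫ r in a..x, φ (r + s)) - K * M := by
      rw [intervalIntegral.integral_sub (contshift.intervalIntegrable a x)
        ((show Continuous (fun r => K * φ r) from continuous_const.mul φ_cont).intervalIntegrable a x),
        intervalIntegral.integral_const_mul, hM]
    linarith [heq ▸ hpos]
  -- I2 < K * M
  have hI2 : (∫ r in x..b, φ (r + s)) < K * M := by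
    have hpos : 0 < ∫ r in x..b, (K * φ r - φ (r + s)) := by
      apply intervalIntegral.intervalIntegral_pos_of_pos_on
      · exact ((continuous_const.mul φ_cont).sub contshift).intervalIntegrable x b
      · intro r hr
        rw [φ_shift]
        have : Real.exp (-s * r - s ^ 2 / 2) < K := by
          apply Real.exp_lt_exp.2
          nlinarith [hr.1, hs0]
        nlinarith [φ_pos r]
      · exact hxb
    have heq : (∫ r in x..b, (K * φ r - φ (r + s)))
        = K * M - ∫ r in x..b, φ (r + s) := by
      rw [intervalIntegral.integral_sub ((show Continuous (fun r => K * φ r) from continuous_const.mul φ_cont).intervalIntegrable x b)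
        (contshift.intervalIntegrable x b),
        intervalIntegral.integral_const_mul, hM2]
    linarith [heq ▸ hpos]
  -- translate the shifted integrals into CDF differences
  have hshift1 : (∫ r in a..x, φ (r + s)) = stdNormalCDF (x + s) - stdNormalCDF (a + s) := by
    rw [intervalIntegral.integral_comp_add_right φ s, ← cdf_sub]
  have hshift2 : (∫ r in x..b, φ (r + s)) = stdNormalCDF (b + s) - stdNormalCDF (x + s) := by
    rw [intervalIntegral.integral_comp_add_right φ s, ← cdf_sub]
  have hmain : (1/2) * stdNormalCDF (a + s) + (1/2) * stdNormalCDF (b + s)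
      < stdNormalCDF (x + s) := by
    nlinarith [hI1, hI2, hshift1, hshift2]
  -- conclude
  have ht₂ : stdNormalCDF (h t₂) = (1/2) * stdNormalCDF (a + s) + (1/2) * stdNormalCDF (b + s) := by
    rw [hh t₂, key t₂]
    have e1 : t₂ - |c| = a + s := by rw [ha, hs]; ring
    have e2 : t₂ + |c| = b + s := by rw [hb, hs]; ring
    rw [e1, e2]
  have : stdNormalCDF (h t₂) < stdNormalCDF (x + s) := by rw [ht₂]; exact hmain
  have hfin : h t₂ < x + s := cdf_strictMono.lt_iff_lt.mp this
  rw [hx] at hfin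
  simp [hs] at hfin
  linarith
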